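/- Let n ≥ 2, S = (a₁,…,aₙ) a tuple of positive integers, and M a nonempty subset of {1,…,n}. Define Δ_M(S) = lcm(S) / gcd{ lcm(Sⱼ) : j ∈ M }. Then Δ_M(S) is a positive integer, Δ_M(S) = Δ_{J(S)∩M}(S), and Δ_M(S) = 1 if and only if M ∩ J(S) = ∅. -/

import Mathlib

/-- `Δ_M(S) = lcm(S) / gcd { lcm(Sⱼ) : j ∈ M }`, with `Δ_∅(S) = 1` by convention. -/
def Delta {n : ℕ} (a : Fin n → ℕ) (M : Finset (Fin n)) : ℕ :=
  if M = ∅ then 1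
  else Finset.univ.lcm a / M.gcd (fun j => (Finset.univ.erase j).lcm a)

section Aux
variable {n : ℕ} (a : Fin n → ℕ)

lemma aux_dvd (j : Fin n) : (Finset.univ.erase j).lcm a ∣ Finset.univ.lcm a :=
  Finset.lcm_dvd fun i _ => Finset.dvd_lcm (Finset.mem_univ i)

lemma aux_eq (j : Fin n) (h : a j ∣ (Finset.univ.erase j).lcm a) :
    (Finset.univ.erase j).lcm a = Finset.univ.lcm a := by
  refine Nat.dvd_antisymm (aux_dvd a j) (Finset.lcm_dvd fun i _ => ?_)
  by_cases hij : i = j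
  · exact hij ▸ h
  · exact Finset.dvd_lcm (Finset.mem_erase.mpr ⟨hij, Finset.mem_univ i⟩)

lemma lcm_pos' (ha : ∀ i, 0 < a i) (s : Finset (Fin n)) : 0 < s.lcm a := by
  rw [Nat.pos_iff_ne_zero]
  intro h
  rw [Finset.lcm_eq_zero_iff] at h
  obtain ⟨i, -, hi⟩ := h
  exact (ha i).ne' hi
end Aux

theorem delta_props (n : ℕ) (hn : 2 ≤ n) (a : Fin n → ℕ) (ha : ∀ i, 0 < a i)
    (M : Finset (Fin n)) (hM : M.Nonempty)
    (J : Finset (Fin n))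
    (hJ : J = Finset.univ.filter fun j => ¬ a j ∣ (Finset.univ.erase j).lcm a) :
    0 < Delta a M ∧
    (M.gcd fun j => (Finset.univ.erase j).lcm a) ∣ Finset.univ.lcm a ∧
    Delta a M = Delta a (J ∩ M) ∧
    (Delta a M = 1 ↔ M ∩ J = ∅) := by
  set L := Finset.univ.lcm a with hL
  set f : Fin n → ℕ := fun j => (Finset.univ.erase j).lcm a with hf
  obtain ⟨j0, hj0⟩ := hM
  have hfdvdL : ∀ j, f j ∣ L := fun j => aux_dvd a j
  have hgdvd : M.gcd f ∣ L := (Finset.gcd_dvd hj0).trans (hfdvdL j0)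
  have hLpos : 0 < L := lcm_pos' a ha _
  have hgpos : 0 < M.gcd f := by
    rw [Nat.pos_iff_ne_zero, Ne, Finset.gcd_eq_zero_iff]
    intro h
    exact (lcm_pos' a ha _).ne' (h j0 hj0)
  have hMne : M ≠ ∅ := Finset.nonempty_iff_ne_empty.mp ⟨j0, hj0⟩
  have hDM : Delta a M = L / M.gcd f := by simp [Delta, hMne]; rfl
  have hDpos : 0 < Delta a M := by
    rw [hDM]
    exact Nat.div_pos (Nat.le_of_dvd hLpos hgdvd) hgpos
  have hJmem : ∀ j, j ∈ J ↔ ¬ a j ∣ f j := by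
    intro j; rw [hJ]; simp [hf]
  have hnotJ : ∀ j ∉ J, f j = L := by
    intro j hj
    exact aux_eq a j (not_not.mp ((hJmem j).not.mp hj))
  -- key: if J ∩ M = ∅ then gcd M f = L
  have hgcd_empty : J ∩ M = ∅ → M.gcd f = L := by
    intro hJM
    have hall : ∀ j ∈ M, f j = L := by
      intro j hj
      refine hnotJ j fun hjJ => ?_
      have : j ∈ J ∩ M := Finset.mem_inter.mpr ⟨hjJ, hj⟩
      simp [hJM] at this
    refine Nat.dvd_antisymm ((Finset.gcd_dvd hj0).trans ((hall j0 hj0) ▸ dvd_rfl)) ?_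
    exact Finset.dvd_gcd fun j hj => (hall j hj) ▸ dvd_rfl
  have hgcd_inter : (J ∩ M).Nonempty → M.gcd f = (J ∩ M).gcd f := by
    rintro ⟨k, hk⟩
    refine Nat.dvd_antisymm (Finset.gcd_mono Finset.inter_subset_right) ?_
    refine Finset.dvd_gcd fun j hj => ?_
    by_cases hjJ : j ∈ J
    · exact Finset.gcd_dvd (Finset.mem_inter.mpr ⟨hjJ, hj⟩)
    · rw [hnotJ j hjJ]
      exact (Finset.gcd_dvd hk).trans (hfdvdL k)
  refine ⟨hDpos, hgdvd, ?_, ?_⟩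
  · by_cases hJM : J ∩ M = ∅
    · rw [hDM, hgcd_empty hJM, Nat.div_self hLpos, Delta, if_pos hJM]
    · have hne : (J ∩ M).Nonempty := Finset.nonempty_iff_ne_empty.mpr hJM
      rw [hDM, hgcd_inter hne, Delta, if_neg hJM]
  · rw [hDM]
    constructor
    · intro h1
      have hgL : M.gcd f = L := by
        have := Nat.div_mul_cancel hgdvd
        rw [h1, one_mul] at this
        exact this
      rw [Finset.eq_empty_iff_forall_notMem]
      rintro j hj
      obtain ⟨hjM, hjJ⟩ := Finset.mem_inter.mp hj
      have hfj : f j = L := Nat.dvd_antisymm (hfdvdL j) (hgL ▸ Finset.gcd_dvd hjM)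
      exact (hJmem j).mp hjJ (hfj ▸ Finset.dvd_lcm (Finset.mem_univ j))
    · intro h
      rw [hgcd_empty (by rw [Finset.inter_comm]; exact h), Nat.div_self hLpos]
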